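/- If a Q×Q matrix Φ of formulas φ_{p,q}(x̄,ȳ) is deterministic and every entry is expressible in first-order logic with k-ary deterministic transitive closure (FO+DTC^k), then every entry of its computation closure Φ^# is also expressible in FO+DTC^k. -/

import Mathlib

namespace NestedPebbles

/-- Trees over a ranked alphabet `(Sig, rank)`: terms `σ(t₁,…,tₙ)` with `rank σ = n`. -/
inductive RTree (Sig : Type) (rank : Sig → ℕ) : Type
  | node (a : Sig) (children : Fin (rank a) → RTree Sig rank) : RTree Sig rank

namespace RTree

variable {Sig : Type} {rank : Sig → ℕ}

/-- The label of the root symbol. -/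
def label : RTree Sig rank → Sig
  | node a _ => a

/-- The `i`-th (0-based) immediate subtree, if it exists. -/
def child : RTree Sig rank → ℕ → Option (RTree Sig rank)
  | node a c, i => if h : i < rank a then some (c ⟨i, h⟩) else none

/-- The subtree at a position (a list of 0-based child indices, read from the root). -/
def subtree : RTree Sig rank → List ℕ → Option (RTree Sig rank)
  | t, [] => some t
  | t, i :: p => (t.child i).bind fun s => s.subtree p

end RTree

variable {Sig : Type} {rank : Sig → ℕ}

/-- `p` is (the address of) a node of `t`. -/
def IsPos (t : RTree Sig rank) (p : List ℕ) : Prop := (t.subtree p).isSome = true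

/-- The type of nodes of a tree `t`, as valid positions. -/
def Pos (t : RTree Sig rank) : Type := { p : List ℕ // IsPos t p }

/-- The root node. -/
def rootPos (t : RTree Sig rank) : Pos t := ⟨[], rfl⟩

/-- The label of the node of `t` at position `p`. -/
def labelAt (t : RTree Sig rank) (p : List ℕ) : Option Sig := (t.subtree p).map RTree.label

/-- The child number of a node: `0` for the root, and `j` for a `j`-th child (1-based). -/
def childNo (p : List ℕ) : ℕ :=
  match p.getLast? with
  | none => 0
  | some j => j + 1

/-!  ### First-order logic with k-ary transitive closure, on trees  -/

/-- First-order formulas over a ranked alphabet, with a `k`-ary transitive closure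
operator.  Variables are natural numbers.  `lab a x` means `x` has label `a`;
`edg i x y` means `y` is the `i`-th child of `x` (`i` is 1-based);
`le x y` means `x` is an ancestor of `y`; `tc xs ys φ us vs` is the transitive
closure `φ*` of `φ` with respect to the tuples of variables `xs`, `ys` (which it
binds), applied to the tuples of variables `us`, `vs`. -/
inductive TForm (Sig : Type) (rank : Sig → ℕ) (k : ℕ) : Type
  | lab (a : Sig) (x : ℕ)
  | edg (i : ℕ) (x y : ℕ)
  | le (x y : ℕ)
  | eq (x y : ℕ)
  | not (φ : TForm Sig rank k)
  | and (φ ψ : TForm Sig rank k)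
  | or (φ ψ : TForm Sig rank k)
  | ex (x : ℕ) (φ : TForm Sig rank k)
  | all (x : ℕ) (φ : TForm Sig rank k)
  | tc (xs ys : Fin k → ℕ) (φ : TForm Sig rank k) (us vs : Fin k → ℕ)

/-- Update a valuation on a tuple of variables simultaneously. -/
noncomputable def updVec {α : Type} {k : ℕ} (ν : ℕ → α) (xs : Fin k → ℕ) (a : Fin k → α) :
    ℕ → α :=
  fun n => if h : ∃ i, xs i = n then a h.choose else ν n

/-- Satisfaction of a formula in a tree `t` under a valuation of the variables by
nodes of `t`. -/
def Sat {k : ℕ} (t : RTree Sig rank) : TForm Sig rank k → (ℕ → Pos t) → Prop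
  | .lab a x, ν => labelAt t (ν x).1 = some a
  | .edg i x y, ν => 1 ≤ i ∧ (ν y).1 = (ν x).1 ++ [i - 1]
  | .le x y, ν => (ν x).1 <+: (ν y).1
  | .eq x y, ν => ν x = ν y
  | .not φ, ν => ¬ Sat t φ ν
  | .and φ ψ, ν => Sat t φ ν ∧ Sat t ψ ν
  | .or φ ψ, ν => Sat t φ ν ∨ Sat t ψ ν
  | .ex x φ, ν => ∃ u : Pos t, Sat t φ (Function.update ν x u)
  | .all x φ, ν => ∀ u : Pos t, Sat t φ (Function.update ν x u)
  | .tc xs ys φ us vs, ν =>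
      Relation.ReflTransGen
        (fun a b : Fin k → Pos t => Sat t φ (updVec (updVec ν xs a) ys b))
        (fun i => ν (us i)) (fun i => ν (vs i))

/-- The free variables of a formula. -/
def freeVars {k : ℕ} : TForm Sig rank k → Set ℕ
  | .lab _ x => {x}
  | .edg _ x y => {x, y}
  | .le x y => {x, y}
  | .eq x y => {x, y}
  | .not φ => freeVars φ
  | .and φ ψ => freeVars φ ∪ freeVars ψ
  | .or φ ψ => freeVars φ ∪ freeVars ψ
  | .ex x φ => freeVars φ \ {x}
  | .all x φ => freeVars φ \ {x}
  | .tc xs ys φ us vs =>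
      (freeVars φ \ (Set.range xs ∪ Set.range ys)) ∪ Set.range us ∪ Set.range vs

/-- Two `k`-tuples of variables consist of `2k` pairwise distinct variables. -/
def Distinct2 {k : ℕ} (xs ys : Fin k → ℕ) : Prop :=
  Function.Injective xs ∧ Function.Injective ys ∧ ∀ i j, xs i ≠ ys j

/-- `φ` is functional in the tuples of variables `xs`, `ys`: for every tree, every
valuation of the remaining variables, and every value of `xs`, there is at most one
value of `ys` satisfying `φ`. -/
def FunctionalIn {k : ℕ} (φ : TForm Sig rank k) (xs ys : Fin k → ℕ) : Prop :=
  ∀ (t : RTree Sig rank) (ν : ℕ → Pos t) (a b b' : Fin k → Pos t),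
    Sat t φ (updVec (updVec ν xs a) ys b) →
    Sat t φ (updVec (updVec ν xs a) ys b') → b = b'

/-- Well-formedness: in each transitive closure the `2k` bound variables are
pairwise distinct and occur free in the body. -/
def WF {k : ℕ} : TForm Sig rank k → Prop
  | .not φ => WF φ
  | .and φ ψ => WF φ ∧ WF ψ
  | .or φ ψ => WF φ ∧ WF ψ
  | .ex _ φ => WF φ
  | .all _ φ => WF φ
  | .tc xs ys φ _ _ =>
      Distinct2 xs ys ∧ (Set.range xs ∪ Set.range ys) ⊆ freeVars φ ∧ WF φ
  | _ => True

/-- All transitive closures occurring in the formula are deterministic, i.e., applied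
to functional formulas. -/
def DetTC {k : ℕ} : TForm Sig rank k → Prop
  | .not φ => DetTC φ
  | .and φ ψ => DetTC φ ∧ DetTC ψ
  | .or φ ψ => DetTC φ ∧ DetTC ψ
  | .ex _ φ => DetTC φ
  | .all _ φ => DetTC φ
  | .tc xs ys φ _ _ => FunctionalIn φ xs ys ∧ DetTC φ
  | _ => True

/-- All occurrences of transitive closure are positive (within the scope of an even
number of negations); the polarity parameter `b` is `true` for an even number. -/
def PosTC {k : ℕ} : Bool → TForm Sig rank k → Prop
  | b, .not φ => PosTC (!b) φ
  | b, .and φ ψ => PosTC b φ ∧ PosTC b ψ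
  | b, .or φ ψ => PosTC b φ ∧ PosTC b ψ
  | b, .ex _ φ => PosTC b φ
  | b, .all _ φ => PosTC b φ
  | b, .tc _ _ φ _ _ => b = true ∧ PosTC b φ
  | _, _ => True

/-- The formula contains no transitive closure operator (pure first-order). -/
def TCFree {k : ℕ} : TForm Sig rank k → Prop
  | .not φ => TCFree φ
  | .and φ ψ => TCFree φ ∧ TCFree ψ
  | .or φ ψ => TCFree φ ∧ TCFree ψ
  | .ex _ φ => TCFree φ
  | .all _ φ => TCFree φ
  | .tc _ _ _ _ _ => False
  | _ => True

/-- The tree language defined by a (closed) formula. -/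
def treesOf {k : ℕ} (φ : TForm Sig rank k) : Set (RTree Sig rank) :=
  {t | Sat t φ fun _ => rootPos t}

/-- `FO+DTC^k`: tree languages definable by closed first-order formulas with `k`-ary
deterministic transitive closure. -/
def FODTC (Sig : Type) (rank : Sig → ℕ) (k : ℕ) : Set (Set (RTree Sig rank)) :=
  {L | ∃ φ : TForm Sig rank k, WF φ ∧ DetTC φ ∧ freeVars φ = ∅ ∧ L = treesOf φ}

/-- `FO+TC^k`: tree languages definable by closed first-order formulas with `k`-ary
transitive closure. -/
def FOTC (Sig : Type) (rank : Sig → ℕ) (k : ℕ) : Set (Set (RTree Sig rank)) :=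
  {L | ∃ φ : TForm Sig rank k, WF φ ∧ freeVars φ = ∅ ∧ L = treesOf φ}

/-- `FO+posTC^k`: tree languages definable by closed first-order formulas in which
every occurrence of the `k`-ary transitive closure operator is positive. -/
def FOposTC (Sig : Type) (rank : Sig → ℕ) (k : ℕ) : Set (Set (RTree Sig rank)) :=
  {L | ∃ φ : TForm Sig rank k, WF φ ∧ PosTC true φ ∧ freeVars φ = ∅ ∧ L = treesOf φ}

/-!  ### k-head tree-walking automata with nested pebbles  -/

/-- Tests of a `k`-head tree-walking automaton with pebble set `X`:
label of the node under head `i`, presence of pebble `x` at head `i`, and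
child number of the node under head `i`. -/
inductive TTest (Sig : Type) (k : ℕ) (X : Type) : Type
  | lab (i : Fin k) (a : Sig)
  | peb (i : Fin k) (x : X)
  | chno (i : Fin k) (j : ℕ)

/-- Instructions: move head `i` up / down to the `j`-th child (1-based), drop a
pebble at head `i`, retrieve the most recently dropped pebble (from a distance),
or perform a positive (`b = true`) or negated (`b = false`) test. -/
inductive TInstr (Sig : Type) (k : ℕ) (X : Type) : Type
  | up (i : Fin k)
  | down (i : Fin k) (j : ℕ)
  | dropPeb (i : Fin k) (x : X)
  | retrieve (x : X)
  | test (b : Bool) (τ : TTest Sig k X)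

/-- A `k`-head tree-walking automaton with nested pebbles: a finite state set `Q`,
a finite pebble set `X`, an initial state, accepting states, and a finite set of
instructions `⟨p, χ, q⟩`. -/
structure TWA (Sig : Type) (rank : Sig → ℕ) (k : ℕ) : Type 1 where
  Q : Type
  finQ : Fintype Q
  X : Type
  finX : Fintype X
  q0 : Q
  acc : Set Q
  instr : Set (Q × TInstr Sig k X × Q)
  instrFin : instr.Finite

/-- Configurations: a state, the positions of the `k` heads, and the stack of
dropped pebbles with their positions (most recent first). -/
abbrev TConf {Sig : Type} {rank : Sig → ℕ} {k : ℕ} (A : TWA Sig rank k)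
    (t : RTree Sig rank) : Type :=
  A.Q × (Fin k → Pos t) × List (A.X × Pos t)

/-- Semantics of tests. -/
def testHolds {k : ℕ} (t : RTree Sig rank) {X : Type} (τ : TTest Sig k X)
    (hs : Fin k → Pos t) (π : List (X × Pos t)) : Prop :=
  match τ with
  | .lab i a => labelAt t (hs i).1 = some a
  | .peb i x => (x, hs i) ∈ π
  | .chno i j => childNo (hs i).1 = j

/-- Semantics of a single instruction, relating head positions and pebble stacks
before and after. -/
def instrStep {k : ℕ} (t : RTree Sig rank) {X : Type} (ins : TInstr Sig k X)
    (hs : Fin k → Pos t) (π : List (X × Pos t))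
    (hs' : Fin k → Pos t) (π' : List (X × Pos t)) : Prop :=
  match ins with
  | .up i => π' = π ∧ (∃ j : ℕ, (hs i).1 = (hs' i).1 ++ [j]) ∧ ∀ h, h ≠ i → hs' h = hs h
  | .down i j => π' = π ∧ 1 ≤ j ∧ (hs' i).1 = (hs i).1 ++ [j - 1] ∧ ∀ h, h ≠ i → hs' h = hs h
  | .dropPeb i x => hs' = hs ∧ π' = (x, hs i) :: π ∧ ∀ w, (x, w) ∉ π
  | .retrieve x => hs' = hs ∧ ∃ w, π = (x, w) :: π'
  | .test b τ => hs' = hs ∧ π' = π ∧ (testHolds t τ hs π ↔ b = true)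

/-- The step relation of automaton `A` on tree `t`. -/
def Step {k : ℕ} (A : TWA Sig rank k) (t : RTree Sig rank) :
    TConf A t → TConf A t → Prop :=
  fun c c' => ∃ ins : TInstr Sig k A.X,
    (c.1, ins, c'.1) ∈ A.instr ∧ instrStep t ins c.2.1 c.2.2 c'.2.1 c'.2.2

/-- `χ'` is the negation of the test `χ`. -/
def negOf {k : ℕ} {X : Type} (χ χ' : TInstr Sig k X) : Prop :=
  ∃ b τ, χ = TInstr.test b τ ∧ χ' = TInstr.test (!b) τ

/-- Determinism: any two distinct instructions with the same source state consist
of a test and its negation. -/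
def Deterministic {k : ℕ} (A : TWA Sig rank k) : Prop :=
  ∀ p χ₁ q₁ χ₂ q₂, (p, χ₁, q₁) ∈ A.instr → (p, χ₂, q₂) ∈ A.instr →
    (χ₁, q₁) ≠ (χ₂, q₂) → negOf χ₁ χ₂ ∨ negOf χ₂ χ₁

/-- The initial configuration: initial state, all heads at the root, no pebbles. -/
def initConf {k : ℕ} (A : TWA Sig rank k) (t : RTree Sig rank) : TConf A t :=
  (A.q0, fun _ => rootPos t, [])

/-- A configuration is halting if no step is possible from it. -/
def HaltingConf {k : ℕ} (A : TWA Sig rank k) (t : RTree Sig rank) (c : TConf A t) : Prop :=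
  ∀ c', ¬ Step A t c c'

/-- Acceptance: some computation from the initial configuration halts in an
accepting state with all heads at the root and no pebbles on the tree. -/
def Accepts {k : ℕ} (A : TWA Sig rank k) (t : RTree Sig rank) : Prop :=
  ∃ q ∈ A.acc,
    Relation.ReflTransGen (Step A t) (initConf A t) (q, fun _ => rootPos t, []) ∧
    HaltingConf A t (q, fun _ => rootPos t, [])

/-- The tree language accepted by `A`. -/
def Lang {k : ℕ} (A : TWA Sig rank k) : Set (RTree Sig rank) := {t | Accepts A t}

/-- The automaton uses no pebbles at all. -/
def PebbleFree {k : ℕ} (A : TWA Sig rank k) : Prop :=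
  ∀ p χ q, (p, χ, q) ∈ A.instr →
    (∀ i x, χ ≠ TInstr.dropPeb i x) ∧ (∀ x, χ ≠ TInstr.retrieve x) ∧
    (∀ b i x, χ ≠ TInstr.test b (TTest.peb i x))

/-- `DPTWA^k`: tree languages accepted by deterministic `k`-head tree-walking
automata with nested pebbles. -/
def DPTWA (Sig : Type) (rank : Sig → ℕ) (k : ℕ) : Set (Set (RTree Sig rank)) :=
  {L | ∃ A : TWA Sig rank k, Deterministic A ∧ L = Lang A}

/-- `NPTWA^k`: tree languages accepted by nondeterministic `k`-head tree-walking
automata with nested pebbles. -/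
def NPTWA (Sig : Type) (rank : Sig → ℕ) (k : ℕ) : Set (Set (RTree Sig rank)) :=
  {L | ∃ A : TWA Sig rank k, L = Lang A}

/-- `NTWA^k`: tree languages accepted by nondeterministic `k`-head tree-walking
automata without pebbles. -/
def NTWA (Sig : Type) (rank : Sig → ℕ) (k : ℕ) : Set (Set (RTree Sig rank)) :=
  {L | ∃ A : TWA Sig rank k, PebbleFree A ∧ L = Lang A}

end NestedPebbles

namespace NestedPebbles

variable {Sig : Type} {rank : Sig → ℕ} {k : ℕ}

/-- One step of the matrix `Φ` of formulas: from state `p` with head tuple `a` to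
state `q` with head tuple `b`, provided `φ_{p,q}(a,b)` holds (the remaining free
variables being valuated by `ν`). -/
def MStep {Q : Type} (Φ : Q → Q → TForm Sig rank k) (xs ys : Fin k → ℕ)
    (t : RTree Sig rank) (ν : ℕ → Pos t) :
    Q × (Fin k → Pos t) → Q × (Fin k → Pos t) → Prop :=
  fun c c' => Sat t (Φ c.1 c'.1) (updVec (updVec ν xs c.2) ys c'.2)

/-- The computation closure `Φ^#` of the matrix `Φ`, as a semantic relation:
`φ^#_{p,q}(ā,b̄)` holds iff there is a nonempty `Φ`-path from `(p,ā)` to `(q,b̄)`. -/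
def CompClosure {Q : Type} (Φ : Q → Q → TForm Sig rank k) (xs ys : Fin k → ℕ)
    (t : RTree Sig rank) (ν : ℕ → Pos t) (p q : Q) (a b : Fin k → Pos t) : Prop :=
  Relation.TransGen (MStep Φ xs ys t ν) (p, a) (q, b)

/-- The matrix `Φ` is deterministic: its entries are jointly functional and
exclusive. -/
def DetMatrix {Q : Type} (Φ : Q → Q → TForm Sig rank k) (xs ys : Fin k → ℕ) : Prop :=
  ∀ (t : RTree Sig rank) (ν : ℕ → Pos t) (p q q' : Q) (a b b' : Fin k → Pos t),
    Sat t (Φ p q) (updVec (updVec ν xs a) ys b) →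
    Sat t (Φ p q') (updVec (updVec ν xs a) ys b') → q = q' ∧ b = b'

/-- `q` is a final state of the matrix `Φ`: all entries `φ_{q,r}` are false. -/
def FinalState {Q : Type} (Φ : Q → Q → TForm Sig rank k) (xs ys : Fin k → ℕ)
    (q : Q) : Prop :=
  ∀ (r : Q) (t : RTree Sig rank) (ν : ℕ → Pos t) (a b : Fin k → Pos t),
    ¬ Sat t (Φ q r) (updVec (updVec ν xs a) ys b)

/-- `q` is a final state of the computation closure `Φ^#`: all entries
`φ^#_{q,r}` are false. -/
def FinalForClosure {Q : Type} (Φ : Q → Q → TForm Sig rank k) (xs ys : Fin k → ℕ)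
    (q : Q) : Prop :=
  ∀ (r : Q) (t : RTree Sig rank) (ν : ℕ → Pos t) (a b : Fin k → Pos t),
    ¬ CompClosure Φ xs ys t ν q r a b

end NestedPebbles

namespace NestedPebbles


section AuxTC
variable {Sig : Type} {rank : Sig → ℕ} {k : ℕ}

theorem updVec_notMem {α : Type} (ν : ℕ → α) (v : Fin k → ℕ) (b : Fin k → α) {n : ℕ}
    (h : ¬ ∃ i, v i = n) : updVec ν v b n = ν n := by
  unfold updVec; rw [dif_neg h]

theorem updVec_apply {α : Type} (ν : ℕ → α) {v : Fin k → ℕ} (hv : Function.Injective v)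
    (b : Fin k → α) (i : Fin k) : updVec ν v b (v i) = b i := by
  unfold updVec
  rw [dif_pos ⟨i, rfl⟩]
  congr 1
  exact hv (⟨i, rfl⟩ : ∃ j, v j = v i).choose_spec

theorem updVec_mem_congr {α : Type} (ν ν' : ℕ → α) (v : Fin k → ℕ) (b : Fin k → α) {n : ℕ}
    (h : ∃ i, v i = n) : updVec ν v b n = updVec ν' v b n := by
  unfold updVec; rw [dif_pos h, dif_pos h]

theorem updVec_self {α : Type} (ν : ℕ → α) (v : Fin k → ℕ) :
    updVec ν v (fun i => ν (v i)) = ν := by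
  funext n; unfold updVec
  by_cases h : ∃ i, v i = n
  · rw [dif_pos h]; exact congrArg ν h.choose_spec
  · rw [dif_neg h]

/-- A strict upper bound on the free variables of a formula. -/
def fvBound : TForm Sig rank k → ℕ
  | .lab _ x => x + 1
  | .edg _ x y => max (x + 1) (y + 1)
  | .le x y => max (x + 1) (y + 1)
  | .eq x y => max (x + 1) (y + 1)
  | .not φ => fvBound φ
  | .and φ ψ => max (fvBound φ) (fvBound ψ)
  | .or φ ψ => max (fvBound φ) (fvBound ψ)
  | .ex _ φ => fvBound φ
  | .all _ φ => fvBound φ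
  | .tc _ _ φ us vs =>
      max (fvBound φ)
        (max (Finset.univ.sup fun i => us i + 1) (Finset.univ.sup fun i => vs i + 1))

theorem lt_fvBound : ∀ {φ : TForm Sig rank k} {n : ℕ}, n ∈ freeVars φ → n < fvBound φ := by
  intro φ
  induction φ with
  | lab a x => intro n h; simp only [freeVars, Set.mem_singleton_iff] at h; subst h; simp [fvBound]
  | edg i x y => intro n h; rcases h with h | h <;> simp_all [fvBound]
  | le x y => intro n h; rcases h with h | h <;> simp_all [fvBound]
  | eq x y => intro n h; rcases h with h | h <;> simp_all [fvBound]
  | not φ ih => exact fun h => ih h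
  | and φ ψ ih1 ih2 =>
    intro n h; rcases h with h | h
    · exact lt_of_lt_of_le (ih1 h) (le_max_left _ _)
    · exact lt_of_lt_of_le (ih2 h) (le_max_right _ _)
  | or φ ψ ih1 ih2 =>
    intro n h; rcases h with h | h
    · exact lt_of_lt_of_le (ih1 h) (le_max_left _ _)
    · exact lt_of_lt_of_le (ih2 h) (le_max_right _ _)
  | ex x φ ih => exact fun h => ih h.1
  | all x φ ih => exact fun h => ih h.1
  | tc xs' ys' φ us vs ih =>
    intro n h
    rcases h with (h | ⟨i, rfl⟩) | ⟨i, rfl⟩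
    · exact lt_of_lt_of_le (ih h.1) (le_max_left _ _)
    · have : us i + 1 ≤ Finset.univ.sup fun i => us i + 1 := Finset.le_sup (f := fun i => us i + 1) (Finset.mem_univ i)
      calc us i < us i + 1 := Nat.lt_succ_self _
        _ ≤ _ := le_trans this (le_trans (le_max_left _ _) (le_max_right _ _))
    · have : vs i + 1 ≤ Finset.univ.sup fun i => vs i + 1 := Finset.le_sup (f := fun i => vs i + 1) (Finset.mem_univ i)
      calc vs i < vs i + 1 := Nat.lt_succ_self _
        _ ≤ _ := le_trans this (le_trans (le_max_right _ _) (le_max_right _ _))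

/-- Satisfaction only depends on the valuation of the free variables. -/
theorem sat_congr (t : RTree Sig rank) :
    ∀ (φ : TForm Sig rank k) (ν ν' : ℕ → Pos t),
      (∀ n ∈ freeVars φ, ν n = ν' n) → (Sat t φ ν ↔ Sat t φ ν') := by
  intro φ
  induction φ with
  | lab a x => intro ν ν' h; simp only [Sat]; rw [h x (by simp [freeVars])]
  | edg i x y =>
    intro ν ν' h; simp only [Sat]
    rw [h x (by simp [freeVars]), h y (by simp [freeVars])]
  | le x y =>
    intro ν ν' h; simp only [Sat]
    rw [h x (by simp [freeVars]), h y (by simp [freeVars])]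
  | eq x y =>
    intro ν ν' h; simp only [Sat]
    rw [h x (by simp [freeVars]), h y (by simp [freeVars])]
  | not φ ih => intro ν ν' h; simp only [Sat]; rw [ih ν ν' h]
  | and φ ψ ih1 ih2 =>
    intro ν ν' h; simp only [Sat]
    rw [ih1 ν ν' fun n hn => h n (Or.inl hn), ih2 ν ν' fun n hn => h n (Or.inr hn)]
  | or φ ψ ih1 ih2 =>
    intro ν ν' h; simp only [Sat]
    rw [ih1 ν ν' fun n hn => h n (Or.inl hn), ih2 ν ν' fun n hn => h n (Or.inr hn)]
  | ex x φ ih =>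
    intro ν ν' h; simp only [Sat]
    refine exists_congr fun u => ih _ _ fun n hn => ?_
    by_cases hx : n = x
    · subst hx; simp [Function.update_self]
    · rw [Function.update_of_ne hx, Function.update_of_ne hx]
      exact h n ⟨hn, hx⟩
  | all x φ ih =>
    intro ν ν' h; simp only [Sat]
    refine forall_congr' fun u => ih _ _ fun n hn => ?_
    by_cases hx : n = x
    · subst hx; simp [Function.update_self]
    · rw [Function.update_of_ne hx, Function.update_of_ne hx]
      exact h n ⟨hn, hx⟩
  | tc xs' ys' φ us vs ih =>
    intro ν ν' h; simp only [Sat]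
    have hus : (fun i => ν (us i)) = fun i => ν' (us i) := by
      funext i; exact h (us i) (Or.inl (Or.inr ⟨i, rfl⟩))
    have hvs : (fun i => ν (vs i)) = fun i => ν' (vs i) := by
      funext i; exact h (vs i) (Or.inr ⟨i, rfl⟩)
    have hrel : (fun a b : Fin k → Pos t => Sat t φ (updVec (updVec ν xs' a) ys' b))
        = fun a b => Sat t φ (updVec (updVec ν' xs' a) ys' b) := by
      funext a b
      refine propext (ih _ _ fun n hn => ?_)
      by_cases hys : ∃ i, ys' i = n
      · exact updVec_mem_congr _ _ _ _ hys
      · rw [updVec_notMem _ _ _ hys, updVec_notMem _ _ _ hys]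
        by_cases hxs : ∃ i, xs' i = n
        · exact updVec_mem_congr _ _ _ _ hxs
        · rw [updVec_notMem _ _ _ hxs, updVec_notMem _ _ _ hxs]
          refine h n (Or.inl (Or.inl ⟨hn, ?_⟩))
          rintro (⟨i, hi⟩ | ⟨i, hi⟩)
          exacts [hxs ⟨i, hi⟩, hys ⟨i, hi⟩]
    rw [hus, hvs, hrel]

end AuxTC

section SemPathSec

variable {QT T : Type}

/-- Semantic paths: from `c` to `d` via relation `R`, all intermediate points
(excluding the endpoints) having first component in `S`. -/
def SemPath (R : QT × T → QT × T → Prop) (S : Set QT) (c d : QT × T) : Prop :=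
  ∃ e, Relation.ReflTransGen (fun x y => R x y ∧ y.1 ∈ S) c e ∧ R e d

theorem semPath_single {R : QT × T → QT × T → Prop} {S : Set QT} {c d : QT × T}
    (h : R c d) : SemPath R S c d :=
  ⟨c, Relation.ReflTransGen.refl, h⟩

theorem semPath_mono {R : QT × T → QT × T → Prop} {S S' : Set QT} (hS : S ⊆ S')
    {c d : QT × T} (h : SemPath R S c d) : SemPath R S' c d := by
  obtain ⟨e, h1, h2⟩ := h
  exact ⟨e, Relation.ReflTransGen.mono (fun x y hxy => ⟨hxy.1, hS hxy.2⟩) _ _ h1, h2⟩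

theorem semPath_head {R : QT × T → QT × T → Prop} {S : Set QT} {c x d : QT × T}
    (h : R c x) (hx : x.1 ∈ S) (hxd : SemPath R S x d) : SemPath R S c d := by
  obtain ⟨e, h1, h2⟩ := hxd
  exact ⟨e, Relation.ReflTransGen.head ⟨h, hx⟩ h1, h2⟩

theorem semPath_comp {R : QT × T → QT × T → Prop} {S : Set QT} {c m d : QT × T}
    (h1 : SemPath R S c m) (hm : m.1 ∈ S) (h2 : SemPath R S m d) : SemPath R S c d := by
  obtain ⟨e1, h1, hR1⟩ := h1
  obtain ⟨e2, h2, hR2⟩ := h2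
  exact ⟨e2, (h1.tail ⟨hR1, hm⟩).trans h2, hR2⟩

theorem semPath_empty {R : QT × T → QT × T → Prop} {S : Set QT} (hS : ∀ q, q ∉ S)
    {c d : QT × T} : SemPath R S c d ↔ R c d := by
  constructor
  · rintro ⟨e, h1, h2⟩
    rcases Relation.ReflTransGen.cases_head h1 with rfl | ⟨x, ⟨_, hx⟩, _⟩
    · exact h2
    · exact absurd hx (hS _)
  · exact semPath_single

theorem semPath_univ {R : QT × T → QT × T → Prop} {S : Set QT} (hS : ∀ q, q ∈ S)
    {c d : QT × T} : SemPath R S c d ↔ Relation.TransGen R c d := by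
  constructor
  · rintro ⟨e, h1, h2⟩
    have : Relation.ReflTransGen R c e :=
      Relation.ReflTransGen.mono (fun x y hxy => hxy.1) _ _ h1
    exact Relation.TransGen.tail' this h2
  · intro h
    rw [Relation.TransGen.tail'_iff] at h
    obtain ⟨e, h1, h2⟩ := h
    exact ⟨e, Relation.ReflTransGen.mono (fun x y hxy => ⟨hxy, hS _⟩) _ _ h1, h2⟩

/-- Kleene decomposition of paths with intermediate states in `insert r S`. -/
theorem semPath_insert {R : QT × T → QT × T → Prop} {S : Set QT} {r : QT} {c d : QT × T} :
    SemPath R (insert r S) c d ↔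
      SemPath R S c d ∨ ∃ u w : T, SemPath R S c (r, u) ∧
        Relation.ReflTransGen (fun a b => SemPath R S (r, a) (r, b)) u w ∧
        SemPath R S (r, w) d := by
  constructor
  · rintro ⟨e, hrtg, hR⟩
    induction hrtg using Relation.ReflTransGen.head_induction_on with
    | refl => exact Or.inl ⟨e, Relation.ReflTransGen.refl, hR⟩
    | head hstep _ ih =>
      rename_i c₀ x _
      obtain ⟨hRcx, hxmem⟩ := hstep
      rcases hxmem with hxr | hxS
      · -- x.1 = r
        have hx : x = (r, x.2) := Prod.ext hxr rfl
        rcases ih with hxd | ⟨u, w, h1, h2, h3⟩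
        · refine Or.inr ⟨x.2, x.2, ?_, Relation.ReflTransGen.refl, ?_⟩
          · rw [← hx]; exact semPath_single hRcx
          · rw [← hx]; exact hxd
        · refine Or.inr ⟨x.2, w, ?_, Relation.ReflTransGen.head ?_ h2, h3⟩
          · rw [← hx]; exact semPath_single hRcx
          · rw [← hx]; exact h1
      · rcases ih with hxd | ⟨u, w, h1, h2, h3⟩
        · exact Or.inl (semPath_head hRcx hxS hxd)
        · exact Or.inr ⟨u, w, semPath_head hRcx hxS h1, h2, h3⟩
  · rintro (h | ⟨u, w, h1, h2, h3⟩)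
    · exact semPath_mono (Set.subset_insert _ _) h
    · have key : SemPath R (insert r S) c (r, w) := by
        clear h3
        induction h2 with
        | refl => exact semPath_mono (Set.subset_insert _ _) h1
        | tail _ hK ih =>
          exact semPath_comp ih (Set.mem_insert _ _)
            (semPath_mono (Set.subset_insert _ _) hK)
      exact semPath_comp key (Set.mem_insert _ _)
        (semPath_mono (Set.subset_insert _ _) h3)

/-- First-exit uniqueness for deterministic relations. -/
theorem semPath_unique {R : QT × T → QT × T → Prop}
    (hdet : ∀ c d d', R c d → R c d' → d = d') {S : Set QT} :
    ∀ {c d d' : QT × T}, SemPath R S c d → SemPath R S c d' →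
      d.1 ∉ S → d'.1 ∉ S → d = d' := by
  rintro c d d' ⟨e, h1, hRd⟩ ⟨e', h2, hRd'⟩ hd hd'
  revert h2
  induction h1 using Relation.ReflTransGen.head_induction_on with
  | refl =>
    intro h2
    rcases Relation.ReflTransGen.cases_head h2 with rfl | ⟨x, ⟨hRx, hxS⟩, _⟩
    · exact hdet _ _ _ hRd hRd'
    · have : d = x := hdet _ _ _ hRd hRx
      exact absurd (this ▸ hxS) hd
  | head hstep _ ih =>
    intro h2
    obtain ⟨hRcx, hxS⟩ := hstep
    rcases Relation.ReflTransGen.cases_head h2 with rfl | ⟨x', ⟨hRx', _⟩, h2'⟩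
    · have : d' = _ := hdet _ _ _ hRd' hRcx
      exact absurd (this ▸ hxS) hd'
    · have hx : _ = x' := hdet _ _ _ hRcx hRx'
      exact ih (hx ▸ h2')

theorem rtg_congr {α : Type*} {r r' : α → α → Prop} (h : ∀ a b, r a b ↔ r' a b) {a b : α} :
    Relation.ReflTransGen r a b ↔ Relation.ReflTransGen r' a b := by
  have : r = r' := funext fun a => funext fun b => propext (h a b)
  rw [this]

end SemPathSec

section FormCombinators
variable {Sig : Type} {rank : Sig → ℕ} {k : ℕ}

/-- Existential quantification over a list of tuple components. -/
def exListF (v : Fin k → ℕ) : List (Fin k) → TForm Sig rank k → TForm Sig rank k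
  | [], χ => χ
  | i :: l, χ => .ex (v i) (exListF v l χ)

/-- Componentwise equality of two variable tuples (over a list of components). -/
def eqListF (u v : Fin k → ℕ) : List (Fin k) → TForm Sig rank k
  | [] => .eq 0 0
  | i :: l => .and (.eq (u i) (v i)) (eqListF u v l)

/-- A trivially true formula whose free variables include the listed components. -/
def padListF (u : Fin k → ℕ) : List (Fin k) → TForm Sig rank k
  | [] => .eq 0 0
  | i :: l => .and (.eq (u i) (u i)) (padListF u l)

theorem wf_exListF {v : Fin k → ℕ} {χ : TForm Sig rank k} :
    ∀ {l : List (Fin k)}, WF χ → WF (exListF v l χ) := by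
  intro l h
  induction l with
  | nil => exact h
  | cons i l ih => exact ih

theorem detTC_exListF {v : Fin k → ℕ} {χ : TForm Sig rank k} :
    ∀ {l : List (Fin k)}, DetTC χ → DetTC (exListF v l χ) := by
  intro l h
  induction l with
  | nil => exact h
  | cons i l ih => exact ih

theorem wf_eqListF {u v : Fin k → ℕ} : ∀ {l : List (Fin k)}, WF (eqListF (Sig := Sig) (rank := rank) u v l)
  | [] => trivial
  | _ :: _ => ⟨trivial, wf_eqListF⟩

theorem detTC_eqListF {u v : Fin k → ℕ} : ∀ {l : List (Fin k)}, DetTC (eqListF (Sig := Sig) (rank := rank) u v l)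
  | [] => trivial
  | _ :: _ => ⟨trivial, detTC_eqListF⟩

theorem wf_padListF {u : Fin k → ℕ} : ∀ {l : List (Fin k)}, WF (padListF (Sig := Sig) (rank := rank) u l)
  | [] => trivial
  | _ :: _ => ⟨trivial, wf_padListF⟩

theorem detTC_padListF {u : Fin k → ℕ} : ∀ {l : List (Fin k)}, DetTC (padListF (Sig := Sig) (rank := rank) u l)
  | [] => trivial
  | _ :: _ => ⟨trivial, detTC_padListF⟩

theorem sat_eqListF {t : RTree Sig rank} (ν : ℕ → Pos t) (u v : Fin k → ℕ) :
    ∀ l : List (Fin k), Sat t (eqListF u v l) ν ↔ ∀ i ∈ l, ν (u i) = ν (v i) := by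
  intro l
  induction l with
  | nil => simp [eqListF, Sat]
  | cons i l ih => simp [eqListF, Sat, ih]

theorem sat_padListF {t : RTree Sig rank} (ν : ℕ → Pos t) (u : Fin k → ℕ) :
    ∀ l : List (Fin k), Sat t (padListF u l) ν := by
  intro l
  induction l with
  | nil => simp [padListF, Sat]
  | cons i l ih => exact ⟨rfl, ih⟩

theorem mem_freeVars_padListF {u : Fin k → ℕ} :
    ∀ {l : List (Fin k)} {i : Fin k}, i ∈ l →
      u i ∈ freeVars (padListF (Sig := Sig) (rank := rank) u l) := by
  intro l
  induction l with
  | nil => intro i h; cases h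
  | cons j l ih =>
    intro i h
    rcases List.mem_cons.mp h with rfl | h
    · exact Or.inl (Or.inl rfl)
    · exact Or.inr (ih h)

/-- Simultaneous updates along a list of tuple components. -/
def updList {T : Type} (v : Fin k → ℕ) (b : Fin k → T) : List (Fin k) → (ℕ → T) → (ℕ → T)
  | [], ν => ν
  | i :: l, ν => Function.update (updList v b l ν) (v i) (b i)

theorem updList_update_comm {T : Type} {v : Fin k → ℕ} (b : Fin k → T) {x : ℕ} (p : T)
    (ν : ℕ → T) : ∀ {l : List (Fin k)}, (∀ j ∈ l, v j ≠ x) →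
      updList v b l (Function.update ν x p) = Function.update (updList v b l ν) x p := by
  intro l
  induction l with
  | nil => intro _; rfl
  | cons i l ih =>
    intro h
    simp only [updList]
    rw [ih fun j hj => h j (List.mem_cons_of_mem _ hj)]
    exact Function.update_comm (Ne.symm (h i (List.mem_cons_self))) _ _ _

theorem updList_congr {T : Type} {v : Fin k → ℕ} {b b' : Fin k → T} (ν : ℕ → T) :
    ∀ {l : List (Fin k)}, (∀ j ∈ l, b j = b' j) → updList v b l ν = updList v b' l ν := by
  intro l
  induction l with
  | nil => intro _; rfl
  | cons i l ih =>
    intro h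
    simp only [updList]
    rw [ih fun j hj => h j (List.mem_cons_of_mem _ hj), h i (List.mem_cons_self)]

theorem updList_apply {T : Type} {v : Fin k → ℕ} (hv : Function.Injective v) (b : Fin k → T)
    (ν : ℕ → T) : ∀ {l : List (Fin k)} {i : Fin k}, l.Nodup → i ∈ l →
      updList v b l ν (v i) = b i := by
  intro l
  induction l with
  | nil => intro i _ h; cases h
  | cons j l ih =>
    intro i hnd h
    rcases List.mem_cons.mp h with rfl | h2
    · simp [updList]
    · have hne : v i ≠ v j := fun he => by
        have hij : i = j := hv he
        subst hij
        exact (List.nodup_cons.mp hnd).1 h2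
      simp only [updList]
      rw [Function.update_of_ne hne]
      exact ih (List.nodup_cons.mp hnd).2 h2

theorem updList_notMem {T : Type} {v : Fin k → ℕ} (b : Fin k → T) (ν : ℕ → T) {n : ℕ} :
    ∀ {l : List (Fin k)}, (∀ i ∈ l, v i ≠ n) → updList v b l ν n = ν n := by
  intro l
  induction l with
  | nil => intro _; rfl
  | cons i l ih =>
    intro h
    simp only [updList]
    rw [Function.update_of_ne (Ne.symm (h i (List.mem_cons_self)))]
    exact ih fun j hj => h j (List.mem_cons_of_mem _ hj)

theorem updList_finRange {T : Type} {v : Fin k → ℕ} (hv : Function.Injective v)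
    (b : Fin k → T) (ν : ℕ → T) : updList v b (List.finRange k) ν = updVec ν v b := by
  funext n
  by_cases h : ∃ i, v i = n
  · obtain ⟨i, rfl⟩ := h
    rw [updList_apply hv b ν (List.nodup_finRange k) (List.mem_finRange i),
      updVec_apply _ hv]
  · rw [updList_notMem b ν fun i _ hi => h ⟨i, hi⟩, updVec_notMem _ _ _ h]

theorem sat_exListF {t : RTree Sig rank} {v : Fin k → ℕ} (hv : Function.Injective v)
    (χ : TForm Sig rank k) :
    ∀ {l : List (Fin k)}, l.Nodup → ∀ ν : ℕ → Pos t,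
      (Sat t (exListF v l χ) ν ↔ ∃ b : Fin k → Pos t, Sat t χ (updList v b l ν)) := by
  intro l
  induction l with
  | nil =>
    intro _ ν
    exact ⟨fun h => ⟨fun _ => rootPos t, h⟩, fun ⟨_, h⟩ => h⟩
  | cons i l ih =>
    intro hnd ν
    simp only [exListF, Sat]
    constructor
    · rintro ⟨p, hp⟩
      obtain ⟨b, hb⟩ := (ih (List.nodup_cons.mp hnd).2 _).mp hp
      refine ⟨Function.update b i p, ?_⟩
      simp only [updList]
      have hcomm : updList v b l (Function.update ν (v i) p)
          = Function.update (updList v b l ν) (v i) p := by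
        refine updList_update_comm b p ν fun j hj he => ?_
        exact (List.nodup_cons.mp hnd).1 (hv he ▸ hj)
      rw [hcomm] at hb
      have : updList v b l ν = updList v (Function.update b i p) l ν := by
        refine updList_congr ν fun j hj => ?_
        have : j ≠ i := fun he => (List.nodup_cons.mp hnd).1 (he ▸ hj)
        rw [Function.update_of_ne this]
      rw [← this, Function.update_self]
      exact hb
    · rintro ⟨b, hb⟩
      refine ⟨b i, ?_⟩
      refine (ih (List.nodup_cons.mp hnd).2 _).mpr ⟨b, ?_⟩
      have hcomm : updList v b l (Function.update ν (v i) (b i))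
          = Function.update (updList v b l ν) (v i) (b i) := by
        refine updList_update_comm b (b i) ν fun j hj he => ?_
        exact (List.nodup_cons.mp hnd).1 (hv he ▸ hj)
      rw [hcomm]
      exact hb

theorem sat_exVec {t : RTree Sig rank} {v : Fin k → ℕ} (hv : Function.Injective v)
    (χ : TForm Sig rank k) (ν : ℕ → Pos t) :
    Sat t (exListF v (List.finRange k) χ) ν ↔ ∃ b : Fin k → Pos t, Sat t χ (updVec ν v b) := by
  rw [sat_exListF hv χ (List.nodup_finRange k) ν]
  constructor
  · rintro ⟨b, hb⟩; exact ⟨b, by rwa [updList_finRange hv] at hb⟩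
  · rintro ⟨b, hb⟩; exact ⟨b, by rwa [updList_finRange hv]⟩

end FormCombinators

section MainConstruction
variable {Sig : Type} {rank : Sig → ℕ} {k : ℕ} {Q : Type} [Fintype Q]

/-- A variable index beyond everything used by `Φ`, `xs`, `ys`. -/
def freshN (Φ : Q → Q → TForm Sig rank k) (xs ys : Fin k → ℕ) : ℕ :=
  max (Finset.univ.sup fun pq : Q × Q => fvBound (Φ pq.1 pq.2))
    (max (Finset.univ.sup fun i : Fin k => xs i + 1)
      (Finset.univ.sup fun i : Fin k => ys i + 1))

variable (Φ : Q → Q → TForm Sig rank k) (xs ys : Fin k → ℕ)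

/-- Fresh tuple of variables. -/
def zsV : Fin k → ℕ := fun i => freshN Φ xs ys + i

/-- A second fresh tuple of variables. -/
def wsV : Fin k → ℕ := fun i => freshN Φ xs ys + k + i

theorem xs_lt_freshN (i : Fin k) : xs i < freshN Φ xs ys :=
  lt_of_lt_of_le (Nat.lt_succ_self _)
    (le_trans (Finset.le_sup (f := fun i => xs i + 1) (Finset.mem_univ i))
      (le_trans (le_max_left _ _) (le_max_right _ _)))

theorem ys_lt_freshN (i : Fin k) : ys i < freshN Φ xs ys :=
  lt_of_lt_of_le (Nat.lt_succ_self _)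
    (le_trans (Finset.le_sup (f := fun i => ys i + 1) (Finset.mem_univ i))
      (le_trans (le_max_right _ _) (le_max_right _ _)))

theorem fv_lt_freshN (p q : Q) {n : ℕ} (h : n ∈ freeVars (Φ p q)) : n < freshN Φ xs ys :=
  lt_of_lt_of_le (lt_fvBound h)
    (le_trans (Finset.le_sup (f := fun pq : Q × Q => fvBound (Φ pq.1 pq.2))
      (Finset.mem_univ (p, q))) (le_max_left _ _))

theorem freshN_le_zsV (i : Fin k) : freshN Φ xs ys ≤ zsV Φ xs ys i := Nat.le_add_right _ _

theorem freshN_le_wsV (i : Fin k) : freshN Φ xs ys ≤ wsV Φ xs ys i := by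
  simp only [wsV]; omega

theorem zsV_injective : Function.Injective (zsV Φ xs ys) := fun i j h =>
  Fin.ext (by simp only [zsV] at h; omega)

theorem wsV_injective : Function.Injective (wsV Φ xs ys) := fun i j h =>
  Fin.ext (by simp only [wsV] at h; omega)

theorem not_ex_xs_eq_zs (i : Fin k) : ¬ ∃ j, xs j = zsV Φ xs ys i := by
  rintro ⟨j, hj⟩
  exact absurd (hj ▸ xs_lt_freshN Φ xs ys j) (not_lt.mpr (freshN_le_zsV Φ xs ys i))

theorem not_ex_ys_eq_zs (i : Fin k) : ¬ ∃ j, ys j = zsV Φ xs ys i := by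
  rintro ⟨j, hj⟩
  exact absurd (hj ▸ ys_lt_freshN Φ xs ys j) (not_lt.mpr (freshN_le_zsV Φ xs ys i))

theorem not_ex_xs_eq_ws (i : Fin k) : ¬ ∃ j, xs j = wsV Φ xs ys i := by
  rintro ⟨j, hj⟩
  exact absurd (hj ▸ xs_lt_freshN Φ xs ys j) (not_lt.mpr (freshN_le_wsV Φ xs ys i))

theorem not_ex_ys_eq_ws (i : Fin k) : ¬ ∃ j, ys j = wsV Φ xs ys i := by
  rintro ⟨j, hj⟩
  exact absurd (hj ▸ ys_lt_freshN Φ xs ys j) (not_lt.mpr (freshN_le_wsV Φ xs ys i))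

theorem not_ex_ws_eq_zs (i : Fin k) : ¬ ∃ j, wsV Φ xs ys j = zsV Φ xs ys i := by
  rintro ⟨j, hj⟩
  have := i.isLt
  simp only [zsV, wsV] at hj
  omega

theorem not_ex_zs_eq_ws (i : Fin k) : ¬ ∃ j, zsV Φ xs ys j = wsV Φ xs ys i := by
  rintro ⟨j, hj⟩
  have := j.isLt
  simp only [zsV, wsV] at hj
  omega

theorem not_ex_zs_eq_low {n : ℕ} (hn : n < freshN Φ xs ys) : ¬ ∃ j, zsV Φ xs ys j = n := by
  rintro ⟨j, rfl⟩
  exact absurd hn (not_lt.mpr (freshN_le_zsV Φ xs ys j))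

theorem not_ex_ws_eq_low {n : ℕ} (hn : n < freshN Φ xs ys) : ¬ ∃ j, wsV Φ xs ys j = n := by
  rintro ⟨j, rfl⟩
  exact absurd hn (not_lt.mpr (freshN_le_wsV Φ xs ys j))

theorem mstep_congr (t : RTree Sig rank) (ν ν' : ℕ → Pos t)
    (h : ∀ n, n < freshN Φ xs ys → (¬ ∃ i, xs i = n) → (¬ ∃ i, ys i = n) → ν n = ν' n) :
    MStep Φ xs ys t ν = MStep Φ xs ys t ν' := by
  funext c c'
  unfold MStep
  refine propext (sat_congr t _ _ _ fun n hn => ?_)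
  by_cases h1 : ∃ i, ys i = n
  · exact updVec_mem_congr _ _ _ _ h1
  · rw [updVec_notMem _ _ _ h1, updVec_notMem _ _ _ h1]
    by_cases h2 : ∃ i, xs i = n
    · exact updVec_mem_congr _ _ _ _ h2
    · rw [updVec_notMem _ _ _ h2, updVec_notMem _ _ _ h2]
      exact h n (fv_lt_freshN Φ xs ys _ _ hn) h2 h1

theorem updVec2_xs (hdist : Distinct2 xs ys) {t : RTree Sig rank} (ν : ℕ → Pos t)
    (a b : Fin k → Pos t) :
    (fun i => updVec (updVec ν xs a) ys b (xs i)) = a := by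
  funext i
  rw [updVec_notMem _ _ _ (by rintro ⟨j, hj⟩; exact hdist.2.2 i j hj.symm),
    updVec_apply _ hdist.1]

theorem updVec2_ys (hdist : Distinct2 xs ys) {t : RTree Sig rank} (ν : ℕ → Pos t)
    (a b : Fin k → Pos t) :
    (fun i => updVec (updVec ν xs a) ys b (ys i)) = b := by
  funext i
  rw [updVec_apply _ hdist.2.1]

/-- The formula expressing paths whose intermediate states come from the list `l`
(Kleene-style elimination of states). -/
def psi : List Q → Q → Q → TForm Sig rank k
  | [], p, q => Φ p q
  | r :: l, p, q =>
    .or (psi l p q)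
      (exListF (zsV Φ xs ys) (List.finRange k)
        (exListF (wsV Φ xs ys) (List.finRange k)
          (.and
            (exListF ys (List.finRange k)
              (.and (psi l p r) (eqListF ys (zsV Φ xs ys) (List.finRange k))))
            (.and
              (.tc xs ys
                (.and (psi l r r)
                  (.and (padListF xs (List.finRange k)) (padListF ys (List.finRange k))))
                (zsV Φ xs ys) (wsV Φ xs ys))
              (exListF xs (List.finRange k)
                (.and (psi l r q)
                  (eqListF xs (wsV Φ xs ys) (List.finRange k))))))))

theorem psi_spec (hdist : Distinct2 xs ys) :
    ∀ (l : List Q) (p q : Q) (t : RTree Sig rank) (ν : ℕ → Pos t),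
      Sat t (psi Φ xs ys l p q) ν ↔
        SemPath (MStep Φ xs ys t ν) {x : Q | x ∈ l}
          (p, fun i => ν (xs i)) (q, fun i => ν (ys i)) := by
  intro l
  induction l with
  | nil =>
    intro p q t ν
    rw [semPath_empty (by simp)]
    show Sat t (Φ p q) ν ↔
      Sat t (Φ p q) (updVec (updVec ν xs (fun i => ν (xs i))) ys (fun i => ν (ys i)))
    rw [updVec_self, updVec_self]
  | cons r l ih =>
    intro p q t ν
    have hS : ({x : Q | x ∈ r :: l} : Set Q) = insert r {x : Q | x ∈ l} := by
      ext x; simp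
    rw [hS, semPath_insert]
    show Sat t (psi Φ xs ys l p q) ν ∨ Sat t _ ν ↔ _
    refine or_congr (ih p q t ν) ?_
    -- the existential part
    rw [sat_exVec (zsV_injective Φ xs ys)]
    refine exists_congr fun u => ?_
    rw [sat_exVec (wsV_injective Φ xs ys)]
    refine exists_congr fun w => ?_
    set N := freshN Φ xs ys with hN
    set zs := zsV Φ xs ys with hzs
    set ws := wsV Φ xs ys with hws
    set ν₁ : ℕ → Pos t := updVec (updVec ν zs u) ws w with hν₁
    -- pointwise values of ν₁
    have hν₁xs : ∀ i, ν₁ (xs i) = ν (xs i) := fun i => by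
      rw [hν₁, updVec_notMem _ _ _ (by rw [hws]; exact not_ex_ws_eq_low Φ xs ys (xs_lt_freshN Φ xs ys i)),
        updVec_notMem _ _ _ (by rw [hzs]; exact not_ex_zs_eq_low Φ xs ys (xs_lt_freshN Φ xs ys i))]
    have hν₁ys : ∀ i, ν₁ (ys i) = ν (ys i) := fun i => by
      rw [hν₁, updVec_notMem _ _ _ (by rw [hws]; exact not_ex_ws_eq_low Φ xs ys (ys_lt_freshN Φ xs ys i)),
        updVec_notMem _ _ _ (by rw [hzs]; exact not_ex_zs_eq_low Φ xs ys (ys_lt_freshN Φ xs ys i))]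
    have hν₁zs : ∀ i, ν₁ (zs i) = u i := fun i => by
      rw [hν₁, updVec_notMem _ _ _ (by rw [hws, hzs]; exact not_ex_ws_eq_zs Φ xs ys i),
        hzs, updVec_apply _ (zsV_injective Φ xs ys)]
    have hν₁ws : ∀ i, ν₁ (ws i) = w i := fun i => by
      rw [hν₁, hws, updVec_apply _ (wsV_injective Φ xs ys)]
    have hν₁low : ∀ n, n < N → ν₁ n = ν n := fun n hn => by
      rw [hν₁, updVec_notMem _ _ _ (by rw [hws]; exact not_ex_ws_eq_low Φ xs ys hn),
        updVec_notMem _ _ _ (by rw [hzs]; exact not_ex_zs_eq_low Φ xs ys hn)]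
    show Sat t (.and _ (.and _ _)) ν₁ ↔ _
    have satAnd : ∀ (X Y : TForm Sig rank k) (μ : ℕ → Pos t),
        Sat t (.and X Y) μ ↔ Sat t X μ ∧ Sat t Y μ := fun _ _ _ => Iff.rfl
    rw [satAnd, satAnd]
    -- Part A
    have partA : Sat t (exListF ys (List.finRange k)
        (.and (psi Φ xs ys l p r) (eqListF ys zs (List.finRange k)))) ν₁ ↔
        SemPath (MStep Φ xs ys t ν) {x : Q | x ∈ l} (p, fun i => ν (xs i)) (r, u) := by
      rw [sat_exVec hdist.2.1]
      have key : ∀ b₂ : Fin k → Pos t,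
          Sat t (.and (psi Φ xs ys l p r) (eqListF ys zs (List.finRange k))) (updVec ν₁ ys b₂)
          ↔ (SemPath (MStep Φ xs ys t ν) {x : Q | x ∈ l} (p, fun i => ν (xs i)) (r, b₂)
              ∧ b₂ = u) := by
        intro b₂
        rw [satAnd, sat_eqListF]
        set ν₂ : ℕ → Pos t := updVec ν₁ ys b₂ with hν₂
        have hM : MStep Φ xs ys t ν₂ = MStep Φ xs ys t ν := by
          refine mstep_congr Φ xs ys t ν₂ ν fun n hn hnxs hnys => ?_
          rw [hν₂, updVec_notMem _ _ _ hnys]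
          exact hν₁low n hn
        have hx : (fun i => ν₂ (xs i)) = fun i => ν (xs i) := by
          funext i
          rw [hν₂, updVec_notMem _ _ _ (by rintro ⟨j, hj⟩; exact hdist.2.2 i j hj.symm)]
          exact hν₁xs i
        have hy : (fun i => ν₂ (ys i)) = b₂ := by
          funext i; rw [hν₂, updVec_apply _ hdist.2.1]
        have heq : (∀ i ∈ List.finRange k, ν₂ (ys i) = ν₂ (zs i)) ↔ b₂ = u := by
          constructor
          · intro h
            funext i
            have := h i (List.mem_finRange i)
            rwa [hν₂, updVec_apply _ hdist.2.1,
              updVec_notMem _ _ _ (by rw [hzs]; exact not_ex_ys_eq_zs Φ xs ys i),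
              hν₁zs i] at this
          · rintro rfl i _
            rw [hν₂, updVec_apply _ hdist.2.1,
              updVec_notMem _ _ _ (by rw [hzs]; exact not_ex_ys_eq_zs Φ xs ys i),
              hν₁zs i]
        rw [ih p r t ν₂, hM, hx, hy, heq]
      constructor
      · rintro ⟨b₂, hb⟩
        obtain ⟨h1, rfl⟩ := (key b₂).mp hb
        exact h1
      · intro h
        exact ⟨u, (key u).mpr ⟨h, rfl⟩⟩
    -- Part T (the transitive closure)
    have partT : Sat t (.tc xs ys
          (.and (psi Φ xs ys l r r)
            (.and (padListF xs (List.finRange k)) (padListF ys (List.finRange k))))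
          zs ws) ν₁ ↔
        Relation.ReflTransGen
          (fun a b => SemPath (MStep Φ xs ys t ν) {x : Q | x ∈ l} (r, a) (r, b)) u w := by
      show Relation.ReflTransGen _ (fun i => ν₁ (zs i)) (fun i => ν₁ (ws i)) ↔ _
      have hu : (fun i => ν₁ (zs i)) = u := funext hν₁zs
      have hw : (fun i => ν₁ (ws i)) = w := funext hν₁ws
      rw [hu, hw]
      refine rtg_congr fun a b => ?_
      set μ : ℕ → Pos t := updVec (updVec ν₁ xs a) ys b with hμ
      have hsat : Sat t (.and (psi Φ xs ys l r r)
          (.and (padListF xs (List.finRange k)) (padListF ys (List.finRange k)))) μ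
          ↔ Sat t (psi Φ xs ys l r r) μ := by
        rw [satAnd]
        exact and_iff_left ⟨sat_padListF _ _ _, sat_padListF _ _ _⟩
      rw [hsat, ih r r t μ]
      have hM : MStep Φ xs ys t μ = MStep Φ xs ys t ν := by
        refine mstep_congr Φ xs ys t μ ν fun n hn hnxs hnys => ?_
        rw [hμ, updVec_notMem _ _ _ hnys, updVec_notMem _ _ _ hnxs]
        exact hν₁low n hn
      have hx : (fun i => μ (xs i)) = a := by
        funext i
        rw [hμ, updVec_notMem _ _ _ (by rintro ⟨j, hj⟩; exact hdist.2.2 i j hj.symm),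
          updVec_apply _ hdist.1]
      have hy : (fun i => μ (ys i)) = b := by
        funext i; rw [hμ, updVec_apply _ hdist.2.1]
      rw [hM, hx, hy]
    -- Part B
    have partB : Sat t (exListF xs (List.finRange k)
        (.and (psi Φ xs ys l r q) (eqListF xs ws (List.finRange k)))) ν₁ ↔
        SemPath (MStep Φ xs ys t ν) {x : Q | x ∈ l} (r, w) (q, fun i => ν (ys i)) := by
      rw [sat_exVec hdist.1]
      have key : ∀ a₂ : Fin k → Pos t,
          Sat t (.and (psi Φ xs ys l r q) (eqListF xs ws (List.finRange k))) (updVec ν₁ xs a₂)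
          ↔ (SemPath (MStep Φ xs ys t ν) {x : Q | x ∈ l} (r, a₂) (q, fun i => ν (ys i))
              ∧ a₂ = w) := by
        intro a₂
        rw [satAnd, sat_eqListF]
        set ν₂ : ℕ → Pos t := updVec ν₁ xs a₂ with hν₂
        have hM : MStep Φ xs ys t ν₂ = MStep Φ xs ys t ν := by
          refine mstep_congr Φ xs ys t ν₂ ν fun n hn hnxs hnys => ?_
          rw [hν₂, updVec_notMem _ _ _ hnxs]
          exact hν₁low n hn
        have hx : (fun i => ν₂ (xs i)) = a₂ := by
          funext i; rw [hν₂, updVec_apply _ hdist.1]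
        have hy : (fun i => ν₂ (ys i)) = fun i => ν (ys i) := by
          funext i
          rw [hν₂, updVec_notMem _ _ _ (by rintro ⟨j, hj⟩; exact hdist.2.2 j i hj)]
          exact hν₁ys i
        have heq : (∀ i ∈ List.finRange k, ν₂ (xs i) = ν₂ (ws i)) ↔ a₂ = w := by
          constructor
          · intro h
            funext i
            have := h i (List.mem_finRange i)
            rwa [hν₂, updVec_apply _ hdist.1,
              updVec_notMem _ _ _ (by rw [hws]; exact not_ex_xs_eq_ws Φ xs ys i),
              hν₁ws i] at this
          · rintro rfl i _
            rw [hν₂, updVec_apply _ hdist.1,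
              updVec_notMem _ _ _ (by rw [hws]; exact not_ex_xs_eq_ws Φ xs ys i),
              hν₁ws i]
        rw [ih r q t ν₂, hM, hx, hy, heq]
      constructor
      · rintro ⟨a₂, ha⟩
        obtain ⟨h1, rfl⟩ := (key a₂).mp ha
        exact h1
      · intro h
        exact ⟨w, (key w).mpr ⟨h, rfl⟩⟩
    rw [partA, partT, partB]

theorem psi_wf_det (hdist : Distinct2 xs ys) (hwf : ∀ p q, WF (Φ p q))
    (hdtc : ∀ p q, DetTC (Φ p q)) (hdet : DetMatrix Φ xs ys) :
    ∀ l : List Q, l.Nodup → ∀ p q, WF (psi Φ xs ys l p q) ∧ DetTC (psi Φ xs ys l p q) := by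
  intro l
  induction l with
  | nil => exact fun _ p q => ⟨hwf p q, hdtc p q⟩
  | cons r l ih =>
    intro hnd p q
    obtain ⟨hr, hnd'⟩ := List.nodup_cons.mp hnd
    have ihl := ih hnd'
    constructor
    · -- WF
      refine ⟨(ihl p q).1, ?_⟩
      refine wf_exListF (wf_exListF ?_)
      refine ⟨wf_exListF ⟨(ihl p r).1, wf_eqListF⟩, ?_,
        wf_exListF ⟨(ihl r q).1, wf_eqListF⟩⟩
      refine ⟨hdist, ?_, (ihl r r).1, wf_padListF, wf_padListF⟩
      rintro n (⟨i, rfl⟩ | ⟨i, rfl⟩)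
      · exact Set.mem_union_right _
          (Set.mem_union_left _ (mem_freeVars_padListF (List.mem_finRange i)))
      · exact Set.mem_union_right _
          (Set.mem_union_right _ (mem_freeVars_padListF (List.mem_finRange i)))
    · -- DetTC
      refine ⟨(ihl p q).2, ?_⟩
      refine detTC_exListF (detTC_exListF ?_)
      refine ⟨detTC_exListF ⟨(ihl p r).2, detTC_eqListF⟩, ⟨?_, (ihl r r).2,
        detTC_padListF, detTC_padListF⟩, detTC_exListF ⟨(ihl r q).2, detTC_eqListF⟩⟩
      -- FunctionalIn of the tc body
      intro t ν a b b' h1 h2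
      have hb := (psi_spec Φ xs ys hdist l r r t (updVec (updVec ν xs a) ys b)).mp h1.1
      have hb' := (psi_spec Φ xs ys hdist l r r t (updVec (updVec ν xs a) ys b')).mp h2.1
      rw [updVec2_xs _ _ hdist, updVec2_ys _ _ hdist] at hb hb'
      have hM : MStep Φ xs ys t (updVec (updVec ν xs a) ys b')
          = MStep Φ xs ys t (updVec (updVec ν xs a) ys b) := by
        refine mstep_congr Φ xs ys t _ _ fun n hn hnxs hnys => ?_
        rw [updVec_notMem _ _ _ hnys, updVec_notMem _ _ _ hnys]
      rw [hM] at hb'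
      have hdetR : ∀ c d d' : Q × (Fin k → Pos t),
          MStep Φ xs ys t (updVec (updVec ν xs a) ys b) c d →
          MStep Φ xs ys t (updVec (updVec ν xs a) ys b) c d' → d = d' := by
        intro c d d' hd hd'
        obtain ⟨he1, he2⟩ := hdet t _ c.1 d.1 d'.1 c.2 d.2 d'.2 hd hd'
        exact Prod.ext he1 he2
      have := semPath_unique hdetR hb hb' hr hr
      exact congrArg Prod.snd this

end MainConstruction

/-- Lemma 2(3). If the matrix `Φ` is deterministic and every
entry is a formula of `FO+DTC^k` (all transitive closures deterministic), then
every entry of the computation closure `Φ^#` is expressible in `FO+DTC^k`. -/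
theorem compClosure_in_FODTC (Sig : Type) [Fintype Sig] (rank : Sig → ℕ)
    (k : ℕ) (hk : 1 ≤ k) (Q : Type) [Fintype Q]
    (Φ : Q → Q → TForm Sig rank k) (xs ys : Fin k → ℕ)
    (hdist : Distinct2 xs ys) (hwf : ∀ p q, WF (Φ p q))
    (hdtc : ∀ p q, DetTC (Φ p q)) (hdet : DetMatrix Φ xs ys) :
    ∃ Ψ : Q → Q → TForm Sig rank k,
      (∀ p q, WF (Ψ p q) ∧ DetTC (Ψ p q)) ∧
      ∀ (p q : Q) (t : RTree Sig rank) (ν : ℕ → Pos t) (a b : Fin k → Pos t),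
        Sat t (Ψ p q) (updVec (updVec ν xs a) ys b) ↔
          CompClosure Φ xs ys t ν p q a b := by
  refine ⟨psi Φ xs ys Finset.univ.toList,
    fun p q => psi_wf_det Φ xs ys hdist hwf hdtc hdet _ (Finset.nodup_toList _) p q, ?_⟩
  intro p q t ν a b
  rw [psi_spec Φ xs ys hdist Finset.univ.toList p q t _,
    updVec2_xs _ _ hdist, updVec2_ys _ _ hdist,
    semPath_univ (by intro x; simp)]
  have hM : MStep Φ xs ys t (updVec (updVec ν xs a) ys b) = MStep Φ xs ys t ν := by
    refine mstep_congr Φ xs ys t _ _ fun n hn hnxs hnys => ?_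
    rw [updVec_notMem _ _ _ hnys, updVec_notMem _ _ _ hnxs]
  rw [hM]
  exact Iff.rfl

end NestedPebbles
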